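/- Let G be a graph of order n ≥ 3 containing at least one edge. Then γ_R(G) = 3 if and only if Δ(G) = n − 2. -/

import Mathlib

open SimpleGraph Finset

/-- A Roman dominating function: values in {0,1,2}, every 0-vertex has a neighbor with value 2. -/
def IsRDF {V : Type*} (G : SimpleGraph V) (f : V → ℕ) : Prop :=
  (∀ v, f v ≤ 2) ∧ ∀ v, f v = 0 → ∃ u, G.Adj v u ∧ f u = 2

/-- The Roman domination number: minimum weight of a Roman dominating function. -/
noncomputable def romanDom {V : Type*} [Fintype V] (G : SimpleGraph V) : ℕ :=
  sInf {k | ∃ f : V → ℕ, IsRDF G f ∧ ∑ v, f v = k}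

/-- A dominating set. -/
def IsDomSet {V : Type*} (G : SimpleGraph V) (S : Set V) : Prop :=
  ∀ v, v ∈ S ∨ ∃ u ∈ S, G.Adj u v

/-- The domination number. -/
noncomputable def domNum {V : Type*} [Fintype V] (G : SimpleGraph V) : ℕ :=
  sInf {k | ∃ S : Set V, IsDomSet G S ∧ S.ncard = k}

/-- Degree of a vertex. -/
noncomputable def deg {V : Type*} (G : SimpleGraph V) (v : V) : ℕ :=
  (G.neighborSet v).ncard

/-- Maximum degree. -/
noncomputable def maxDeg {V : Type*} (G : SimpleGraph V) : ℕ :=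
  sSup {d | ∃ v, deg G v = d}

/-- Minimum degree. -/
noncomputable def minDeg {V : Type*} (G : SimpleGraph V) : ℕ :=
  sInf {d | ∃ v, deg G v = d}

/-- The Roman bondage number: minimum size of an edge set whose deletion increases `romanDom`. -/
noncomputable def romanBondage {V : Type*} [Fintype V] (G : SimpleGraph V) : ℕ :=
  sInf {k | ∃ B : Set (Sym2 V), B ⊆ G.edgeSet ∧
    romanDom (G.deleteEdges B) > romanDom G ∧ B.ncard = k}

/-- The bondage number: minimum size of an edge set whose deletion increases `domNum`. -/
noncomputable def bondage {V : Type*} [Fintype V] (G : SimpleGraph V) : ℕ :=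
  sInf {k | ∃ B : Set (Sym2 V), B ⊆ G.edgeSet ∧
    domNum (G.deleteEdges B) > domNum G ∧ B.ncard = k}

/-- A vertex cover. -/
def IsVC {V : Type*} (G : SimpleGraph V) (S : Set V) : Prop :=
  ∀ u v, G.Adj u v → u ∈ S ∨ v ∈ S

/-- The vertex covering number. -/
noncomputable def vcNum {V : Type*} [Fintype V] (G : SimpleGraph V) : ℕ :=
  sInf {k | ∃ S : Set V, IsVC G S ∧ S.ncard = k}

section RDHelpers
variable {V : Type*} [Fintype V] (G : SimpleGraph V)

lemma RD_ncard_compl_singleton (v : V) :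
    ({v}ᶜ : Set V).ncard = Fintype.card V - 1 := by
  classical
  rw [Set.ncard_eq_toFinset_card']; simp [Finset.card_compl]

lemma RD_deg_le (v : V) : deg G v ≤ Fintype.card V - 1 := by
  classical
  have h : G.neighborSet v ⊆ {v}ᶜ := by
    intro w hw; simp; rintro rfl; exact G.irrefl hw
  calc deg G v ≤ ({v}ᶜ : Set V).ncard := Set.ncard_le_ncard h (Set.toFinite _)
    _ = Fintype.card V - 1 := RD_ncard_compl_singleton v

lemma RD_maxDeg_spec [Nonempty V] :
    (∃ v, deg G v = maxDeg G) ∧ ∀ v, deg G v ≤ maxDeg G := by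
  have hbdd : BddAbove {d | ∃ v, deg G v = d} :=
    ⟨Fintype.card V - 1, by rintro d ⟨v, rfl⟩; exact RD_deg_le G v⟩
  have hne : {d | ∃ v, deg G v = d}.Nonempty := ⟨_, Classical.arbitrary V, rfl⟩
  exact ⟨Nat.sSup_mem hne hbdd, fun v => le_csSup hbdd ⟨v, rfl⟩⟩

lemma RD_romanDom_spec :
    (∃ f, IsRDF G f ∧ ∑ v, f v = romanDom G) ∧
      ∀ f, IsRDF G f → romanDom G ≤ ∑ v, f v := by
  have hne : {k | ∃ f, IsRDF G f ∧ ∑ v, f v = k}.Nonempty :=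
    ⟨_, fun _ => 1, ⟨fun _ => one_le_two, fun _ h => absurd h one_ne_zero⟩, rfl⟩
  exact ⟨Nat.sInf_mem hne, fun f hf => Nat.sInf_le ⟨f, hf, rfl⟩⟩

lemma RD_low (f : V → ℕ) (hf : IsRDF G f) (hw : ∑ v, f v ≤ 2)
    (hn : 3 ≤ Fintype.card V) : ∃ u, deg G u = Fintype.card V - 1 := by
  classical
  have hz : ∃ w, f w = 0 := by
    by_contra hc; push_neg at hc
    have h := Finset.card_nsmul_le_sum Finset.univ f 1
      (fun v _ => Nat.one_le_iff_ne_zero.2 (hc v))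
    rw [Finset.card_univ, smul_eq_mul, mul_one] at h
    have h' : Fintype.card V ≤ ∑ v, f v := by simpa using h
    omega
  obtain ⟨w, hw0⟩ := hz
  obtain ⟨u, hadj, hu2⟩ := hf.2 w hw0
  have hsum2 : ∑ v, f v = 2 :=
    le_antisymm hw (hu2 ▸ Finset.single_le_sum (fun v _ => Nat.zero_le _) (Finset.mem_univ u))
  have hrest : ∀ v, v ≠ u → f v = 0 := by
    intro v hv
    have h1 : ∑ x ∈ Finset.univ.erase u, f x = 0 := by
      have h2 := Finset.add_sum_erase Finset.univ f (Finset.mem_univ u)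
      omega
    exact Finset.sum_eq_zero_iff.1 h1 v (by simp [hv])
  have hsub : ({u}ᶜ : Set V) ⊆ G.neighborSet u := by
    intro v hv
    simp only [Set.mem_compl_iff, Set.mem_singleton_iff] at hv
    obtain ⟨x, hx, hx2⟩ := hf.2 v (hrest v hv)
    have hxu : x = u := by
      by_contra h; rw [hrest x h] at hx2; omega
    rw [hxu] at hx
    exact hx.symm
  have h1 := Set.ncard_le_ncard hsub (Set.toFinite _)
  rw [RD_ncard_compl_singleton] at h1
  have h2 := RD_deg_le G u
  exact ⟨u, by unfold deg at *; omega⟩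

lemma RD_high (v : V) (hv : deg G v = Fintype.card V - 1) (hn : 3 ≤ Fintype.card V) :
    ∃ f, IsRDF G f ∧ ∑ x, f x = 2 := by
  classical
  have hset : G.neighborSet v = {v}ᶜ := by
    apply Set.eq_of_subset_of_ncard_le
    · intro w hw; simp; rintro rfl; exact G.irrefl hw
    · rw [RD_ncard_compl_singleton]; exact hv.ge
    · exact Set.toFinite _
  refine ⟨fun w => if w = v then 2 else 0, ⟨fun w => by dsimp only; split_ifs <;> omega, ?_⟩, ?_⟩
  · intro w hw
    have hwv : w ≠ v := by intro h; simp [h] at hw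
    refine ⟨v, ?_, by simp⟩
    have hmem : w ∈ G.neighborSet v := by rw [hset]; simp [hwv]
    exact hmem.symm
  · simp

lemma RD_mid (v : V) (hn : 3 ≤ Fintype.card V) (hv : deg G v = Fintype.card V - 2) :
    ∃ f, IsRDF G f ∧ ∑ x, f x = 3 := by
  classical
  set C := ({v} ∪ G.neighborSet v : Set V)ᶜ with hC
  have hdisj : Disjoint ({v} : Set V) (G.neighborSet v) := by
    rw [Set.disjoint_left]
    rintro a ha hb
    rw [Set.mem_singleton_iff] at ha; subst ha
    exact G.irrefl hb
  have hcu : ({v} ∪ G.neighborSet v : Set V).ncard = Fintype.card V - 1 := by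
    rw [Set.ncard_union_eq hdisj (Set.toFinite _) (Set.toFinite _), Set.ncard_singleton]
    unfold deg at hv; omega
  have hCcard : C.ncard = 1 := by
    have h1 := Set.ncard_add_ncard_compl ({v} ∪ G.neighborSet v : Set V)
    rw [← hC, hcu] at h1
    have h2 : Nat.card V = Fintype.card V := Nat.card_eq_fintype_card
    omega
  obtain ⟨u, hu⟩ := Set.ncard_eq_one.1 hCcard
  have huC : u ∈ C := by rw [hu]; exact Set.mem_singleton u
  have huv : u ≠ v := by
    intro h; rw [h] at huC; simp [hC] at huC
  refine ⟨fun w => if w = v then 2 else if w = u then 1 else 0,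
    ⟨fun w => by dsimp only; split_ifs <;> omega, ?_⟩, ?_⟩
  · intro w hw
    have h1 : w ≠ v := by intro h; simp [h] at hw
    have h2 : w ≠ u := by intro h; simp [h, huv] at hw
    have hwC : w ∉ C := by rw [hu]; simp [h2]
    have hmem : w ∈ ({v} : Set V) ∪ G.neighborSet v := Set.notMem_compl_iff.mp hwC
    rcases hmem with h | h
    · exact absurd (Set.mem_singleton_iff.1 h) h1
    · exact ⟨v, h.symm, by simp⟩
  · have hfeq : ∀ w, (if w = v then 2 else if w = u then 1 else 0) =
        (if w = v then 2 else 0) + (if w = u then 1 else 0) := by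
      intro w
      by_cases h1 : w = v
      · subst h1; simp [Ne.symm huv]
      · simp [h1]
    rw [Finset.sum_congr rfl (fun w _ => hfeq w), Finset.sum_add_distrib]
    simp

end RDHelpers

theorem stmt4 {V : Type*} [Fintype V] (G : SimpleGraph V)
    (hn : 3 ≤ Fintype.card V) (hne : G ≠ ⊥) :
    romanDom G = 3 ↔ maxDeg G = Fintype.card V - 2 := by
  classical
  have hNe : Nonempty V := Fintype.card_pos_iff.1 (by omega)
  obtain ⟨⟨vm, hvm⟩, hmax_le⟩ := RD_maxDeg_spec G
  obtain ⟨⟨f0, hf0, hf0w⟩, hrd_le⟩ := RD_romanDom_spec G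
  constructor
  · intro h3
    rw [h3] at hf0w
    have hub : maxDeg G ≤ Fintype.card V - 2 := by
      by_contra hc
      push_neg at hc
      have hle := RD_deg_le G vm
      have h1 : deg G vm = Fintype.card V - 1 := by omega
      obtain ⟨f, hf, hfw⟩ := RD_high G vm h1 hn
      have h2 := hrd_le f hf
      omega
    by_cases hu : ∃ u, f0 u = 2
    · obtain ⟨u, hu2⟩ := hu
      set T := Finset.univ.filter (fun x => x ≠ u ∧ f0 x ≠ 0) with hT
      have hTcard : T.card ≤ 1 := by
        have h1 : ∑ x ∈ T, f0 x ≤ ∑ x ∈ Finset.univ.erase u, f0 x := by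
          apply Finset.sum_le_sum_of_subset
          intro x hx
          simp only [hT, Finset.mem_filter] at hx
          simp [hx.2.1]
        have h2 : f0 u + ∑ x ∈ Finset.univ.erase u, f0 x = 3 := by
          rw [Finset.add_sum_erase Finset.univ f0 (Finset.mem_univ u)]
          exact hf0w
        have h3 : T.card ≤ ∑ x ∈ T, f0 x := by
          have := Finset.card_nsmul_le_sum T f0 1
            (fun x hx => by simp only [hT, Finset.mem_filter] at hx; omega)
          simpa using this
        omega
      have hW : ∃ w, ∀ x, x ≠ u → x ≠ w → f0 x = 0 := by
        rcases T.eq_empty_or_nonempty with hTe | ⟨w, hwT⟩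
        · refine ⟨u, fun x hx _ => ?_⟩
          by_contra h
          have hxT : x ∈ T := by simp [hT, hx, h]
          rw [hTe] at hxT
          exact absurd hxT (Finset.notMem_empty x)
        · refine ⟨w, fun x hx hxw => ?_⟩
          by_contra h
          have hxT : x ∈ T := by simp [hT, hx, h]
          exact hxw (Finset.card_le_one.1 hTcard x hxT w hwT)
      obtain ⟨w, hw⟩ := hW
      have honly2 : ∀ x, f0 x = 2 → x = u := by
        intro x hx
        by_contra hxu
        have h1 : ∑ y ∈ ({u, x} : Finset V), f0 y ≤ ∑ y, f0 y :=
          Finset.sum_le_sum_of_subset (Finset.subset_univ _)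
        rw [Finset.sum_pair (Ne.symm hxu)] at h1
        omega
      have hsub : (Set.univ \ {u, w} : Set V) ⊆ G.neighborSet u := by
        intro x hx
        simp only [Set.mem_diff, Set.mem_univ, Set.mem_insert_iff,
          Set.mem_singleton_iff, true_and, not_or] at hx
        obtain ⟨y, hyadj, hy2⟩ := hf0.2 x (hw x hx.1 hx.2)
        rw [honly2 y hy2] at hyadj
        exact hyadj.symm
      have hc1 : ({u, w} : Set V).ncard ≤ 2 :=
        (Set.ncard_insert_le u {w}).trans (by simp)
      have hc2 : (Set.univ \ {u, w} : Set V).ncard =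
          (Set.univ : Set V).ncard - ({u, w} : Set V).ncard :=
        Set.ncard_diff (Set.subset_univ _) (Set.toFinite _)
      have hc3 : (Set.univ : Set V).ncard = Fintype.card V := by
        rw [Set.ncard_univ, Nat.card_eq_fintype_card]
      have hc4 := Set.ncard_le_ncard hsub (Set.toFinite _)
      have hc5 := hmax_le u
      unfold deg at hc5
      omega
    · push_neg at hu
      have hall1 : ∀ x, f0 x = 1 := by
        intro x
        have h2 := hf0.1 x
        have h0 : f0 x ≠ 0 := by
          intro h0
          obtain ⟨y, _, hy2⟩ := hf0.2 x h0
          exact hu y hy2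
        have h3 := hu x
        omega
      have hn3 : Fintype.card V = 3 := by
        have hs : ∑ x, f0 x = Fintype.card V := by
          simp [hall1]
        omega
      have hadj : ∃ a b, G.Adj a b := by
        by_contra hc
        push_neg at hc
        exact hne (by ext a b; simp [hc a b])
      obtain ⟨a, b, hab⟩ := hadj
      have h1 : 1 ≤ deg G a := by
        have hbmem : (G.neighborSet a).Nonempty := ⟨b, hab⟩
        have := (Set.ncard_pos (Set.toFinite _)).2 hbmem
        unfold deg; omega
      have h2 := hmax_le a
      omega
  · intro hΔ
    have hvdeg : deg G vm = Fintype.card V - 2 := by rw [hvm, hΔ]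
    obtain ⟨f, hf, hfw⟩ := RD_mid G vm hn hvdeg
    have hle := hrd_le f hf
    rw [hfw] at hle
    have hge : 3 ≤ romanDom G := by
      by_contra hc
      push_neg at hc
      have hw2 : ∑ v, f0 v ≤ 2 := by omega
      obtain ⟨u, hu⟩ := RD_low G f0 hf0 hw2 hn
      have h2 := hmax_le u
      omega
    omega
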